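/- Let Ω ⊆ ℝ^d (d = 2 or 3) be a bounded open set and define the skew-symmetrized trilinear form b(u, v, w) := ½((u·∇v, w) − (u·∇w, v)). There exists a constant C > 0 (depending only on Ω and d) such that for all continuously differentiable vector fields u, v, w : ℝ^d → ℝ^d with compact support contained in Ω, |b(u, v, w)| ≤ C · ‖Du‖_{L²} · ‖Dv‖_{L²} · ‖Dw‖_{L²}, where ‖Du‖_{L²} := (∫_Ω ‖Du(x)‖_op² dx)^{1/2} and similarly for v, w. -/

import Mathlib

open scoped RealInnerProductSpace ENNReal NNReal
open MeasureTheory Function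

/-- Sobolev embedding: `L⁴` norm controlled by `L²` norm of the gradient, for compactly
supported `C¹` functions on a bounded domain in dimension 2 or 3. -/
lemma aux_l4_bound (d : ℕ) (hd : d = 2 ∨ d = 3)
    (Ω : Set (EuclideanSpace ℝ (Fin d))) (hΩbdd : Bornology.IsBounded Ω) :
    ∃ K : ℝ≥0∞, K ≠ ∞ ∧
      ∀ u : EuclideanSpace ℝ (Fin d) → EuclideanSpace ℝ (Fin d),
        ContDiff ℝ 1 u → HasCompactSupport u → tsupport u ⊆ Ω →
        eLpNorm u 4 volume ≤ K * eLpNorm (fderiv ℝ u) 2 volume := by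
  set μ : Measure (EuclideanSpace ℝ (Fin d)) := volume with hμ
  have hfin : Module.finrank ℝ (EuclideanSpace ℝ (Fin d)) = d := by simp
  set C₁ : ℝ≥0 :=
    eLpNormLESNormFDerivOfLeConst (EuclideanSpace ℝ (Fin d)) μ Ω (12/7 : ℝ≥0) 4 with hC₁
  refine ⟨(C₁ : ℝ≥0∞) * (μ Ω) ^ (1/12 : ℝ), ?_, ?_⟩
  · exact ENNReal.mul_ne_top ENNReal.coe_ne_top
      (ENNReal.rpow_ne_top_of_nonneg (by norm_num) hΩbdd.measure_lt_top.ne)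
  intro u hu h2u hsu
  have hsupp : support u ⊆ Ω := (subset_tsupport u).trans hsu
  have hDsupp : support (fderiv ℝ u) ⊆ Ω := (support_fderiv_subset ℝ).trans hsu
  have hDcont : Continuous (fderiv ℝ u) := (hu.fderiv_right (m := 0) le_rfl).continuous
  have hp : (1 : ℝ≥0) ≤ 12/7 := by rw [← NNReal.coe_le_coe]; push_cast; norm_num
  have h2p : (12/7 : ℝ≥0) < Module.finrank ℝ (EuclideanSpace ℝ (Fin d)) := by
    rw [hfin, ← NNReal.coe_lt_coe]; push_cast
    rcases hd with rfl | rfl <;> norm_num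
  have hpq : ((12/7 : ℝ≥0) : ℝ)⁻¹ - (Module.finrank ℝ (EuclideanSpace ℝ (Fin d)) : ℝ)⁻¹
      ≤ ((4 : ℝ≥0) : ℝ)⁻¹ := by
    rw [hfin]; push_cast
    rcases hd with rfl | rfl <;> norm_num
  have h1 : eLpNorm u ((4 : ℝ≥0) : ℝ≥0∞) μ
      ≤ C₁ * eLpNorm (fderiv ℝ u) ((12/7 : ℝ≥0) : ℝ≥0∞) μ :=
    eLpNorm_le_eLpNorm_fderiv_of_le μ hu hsupp hp h2p hpq hΩbdd
  have hle : ((12/7 : ℝ≥0) : ℝ≥0∞) ≤ 2 := by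
    rw [← ENNReal.coe_ofNat, ENNReal.coe_le_coe, ← NNReal.coe_le_coe]; push_cast; norm_num
  have h3 := eLpNorm_le_eLpNorm_mul_rpow_measure_univ (p := ((12/7 : ℝ≥0) : ℝ≥0∞)) (q := 2)
    hle (f := fderiv ℝ u) (μ := μ.restrict Ω) hDcont.aestronglyMeasurable
  rw [Measure.restrict_apply_univ, eLpNorm_restrict_eq_of_support_subset (f := fderiv ℝ u) hDsupp,
    eLpNorm_restrict_eq_of_support_subset (f := fderiv ℝ u) hDsupp] at h3
  have he : (1:ℝ)/((12/7 : ℝ≥0) : ℝ≥0∞).toReal - 1/(2:ℝ≥0∞).toReal = 1/12 := by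
    simp; norm_num
  rw [he] at h3
  have h4 : (4 : ℝ≥0∞) = ((4 : ℝ≥0) : ℝ≥0∞) := by norm_cast
  rw [h4]
  calc eLpNorm u ((4 : ℝ≥0) : ℝ≥0∞) μ
      ≤ C₁ * eLpNorm (fderiv ℝ u) ((12/7 : ℝ≥0) : ℝ≥0∞) μ := h1
    _ ≤ C₁ * (eLpNorm (fderiv ℝ u) 2 μ * μ Ω ^ (1/12 : ℝ)) := by gcongr
    _ = (C₁ : ℝ≥0∞) * (μ Ω) ^ (1/12 : ℝ) * eLpNorm (fderiv ℝ u) 2 μ := by ring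

/-- The `L²` norm over `Ω` expressed via `eLpNorm`. -/
lemma aux_sqrt_eq {d : ℕ} (Ω : Set (EuclideanSpace ℝ (Fin d))) {G : Type*}
    [NormedAddCommGroup G] (g : EuclideanSpace ℝ (Fin d) → G) (hg : Continuous g)
    (h2g : HasCompactSupport g) (hsupp : support g ⊆ Ω) :
    eLpNorm g 2 volume = ENNReal.ofReal (Real.sqrt (∫ x in Ω, ‖g x‖ ^ 2)) := by
  rw [← eLpNorm_restrict_eq_of_support_subset hsupp]
  have hmem : MemLp g 2 (volume.restrict Ω) :=
    (hg.memLp_of_hasCompactSupport h2g).restrict _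
  rw [hmem.eLpNorm_eq_integral_rpow_norm two_ne_zero ENNReal.ofNat_ne_top]
  congr 1
  rw [Real.sqrt_eq_rpow]
  norm_num

/-- The basic trilinear estimate via Hölder. -/
lemma aux_tri {d : ℕ} (Ω : Set (EuclideanSpace ℝ (Fin d)))
    (u v w : EuclideanSpace ℝ (Fin d) → EuclideanSpace ℝ (Fin d))
    (hu : ContDiff ℝ 1 u) (hv : ContDiff ℝ 1 v) (hw : ContDiff ℝ 1 w)
    (h2w : HasCompactSupport w) :
    ENNReal.ofReal |∫ x in Ω, ⟪(fderiv ℝ v x) (u x), w x⟫|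
      ≤ eLpNorm (fderiv ℝ v) 2 volume * (eLpNorm u 4 volume * eLpNorm w 4 volume) := by
  set ν : Measure (EuclideanSpace ℝ (Fin d)) := volume.restrict Ω with hν
  have hDv : Continuous (fderiv ℝ v) := (hv.fderiv_right (m := 0) le_rfl).continuous
  set F : EuclideanSpace ℝ (Fin d) → ℝ := fun x => ⟪(fderiv ℝ v x) (u x), w x⟫ with hF
  have hFcont : Continuous F := (hDv.clm_apply hu.continuous).inner hw.continuous
  have hFcs : HasCompactSupport F := by
    refine h2w.mono ?_
    intro x hx
    intro hw0
    apply hx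
    simp [hF, hw0]
  have hFint : Integrable F ν := (hFcont.integrable_of_hasCompactSupport hFcs).restrict
  set H : EuclideanSpace ℝ (Fin d) → ℝ :=
    fun x => ‖fderiv ℝ v x‖ * (‖u x‖ * ‖w x‖) with hH
  have hFH : ∀ x, ‖F x‖ ≤ ‖H x‖ := by
    intro x
    have h1 : ‖F x‖ ≤ ‖(fderiv ℝ v x) (u x)‖ * ‖w x‖ := by
      rw [hF]; exact abs_real_inner_le_norm _ _
    have h2 : ‖(fderiv ℝ v x) (u x)‖ ≤ ‖fderiv ℝ v x‖ * ‖u x‖ :=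
      (fderiv ℝ v x).le_opNorm _
    have h3 : ‖H x‖ = ‖fderiv ℝ v x‖ * (‖u x‖ * ‖w x‖) := by
      rw [Real.norm_eq_abs, abs_of_nonneg (by positivity)]
    rw [h3]
    nlinarith [norm_nonneg (w x), norm_nonneg (u x), norm_nonneg (fderiv ℝ v x)]
  have h11 : (1:ℝ≥0∞)/1 = 1/2 + 1/2 := by
    rw [ENNReal.div_add_div_same]
    norm_num
    exact (ENNReal.div_self two_ne_zero ENNReal.ofNat_ne_top).symm
  have h12 : (1:ℝ≥0∞)/2 = 1/4 + 1/4 := by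
    rw [ENNReal.div_add_div_same]
    rw [ENNReal.div_eq_div_iff] <;> norm_num
  have step1 : eLpNorm H 1 ν
      ≤ eLpNorm (fun x => ‖fderiv ℝ v x‖) 2 ν * eLpNorm (fun x => ‖u x‖ * ‖w x‖) 2 ν := by
    have hHrfl : H = (fun x => ‖fderiv ℝ v x‖) • (fun x => ‖u x‖ * ‖w x‖) := rfl
    rw [hHrfl]
    exact eLpNorm_smul_le_mul_eLpNorm
      ((hu.continuous.norm.mul hw.continuous.norm).aestronglyMeasurable)
      (hDv.norm.aestronglyMeasurable) (hpqr := ⟨by simpa [one_div] using h11.symm⟩)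
  have step2 : eLpNorm (fun x => ‖u x‖ * ‖w x‖) 2 ν
      ≤ eLpNorm (fun x => ‖u x‖) 4 ν * eLpNorm (fun x => ‖w x‖) 4 ν := by
    have : (fun x => ‖u x‖ * ‖w x‖) = (fun x => ‖u x‖) • (fun x => ‖w x‖) := rfl
    rw [this]
    exact eLpNorm_smul_le_mul_eLpNorm (hw.continuous.norm.aestronglyMeasurable)
      (hu.continuous.norm.aestronglyMeasurable) (hpqr := ⟨by simpa [one_div] using h12.symm⟩)
  calc ENNReal.ofReal |∫ x in Ω, F x|
      = ENNReal.ofReal ‖∫ x, F x ∂ν‖ := by rw [Real.norm_eq_abs]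
    _ ≤ ENNReal.ofReal (∫ x, ‖F x‖ ∂ν) :=
        ENNReal.ofReal_le_ofReal (norm_integral_le_integral_norm F)
    _ = ∫⁻ x, ‖F x‖ₑ ∂ν := ofReal_integral_norm_eq_lintegral_enorm hFint
    _ = eLpNorm F 1 ν := eLpNorm_one_eq_lintegral_enorm.symm
    _ ≤ eLpNorm H 1 ν := eLpNorm_mono hFH
    _ ≤ eLpNorm (fun x => ‖fderiv ℝ v x‖) 2 ν * eLpNorm (fun x => ‖u x‖ * ‖w x‖) 2 ν := step1
    _ ≤ eLpNorm (fun x => ‖fderiv ℝ v x‖) 2 ν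
          * (eLpNorm (fun x => ‖u x‖) 4 ν * eLpNorm (fun x => ‖w x‖) 4 ν) := by
        gcongr
    _ = eLpNorm (fderiv ℝ v) 2 ν * (eLpNorm u 4 ν * eLpNorm w 4 ν) := by
        rw [eLpNorm_norm, eLpNorm_norm, eLpNorm_norm]
    _ ≤ eLpNorm (fderiv ℝ v) 2 volume * (eLpNorm u 4 volume * eLpNorm w 4 volume) := by
        gcongr <;> exact Measure.restrict_le_self

/-- For a bounded open set `Ω ⊆ ℝ^d` (d = 2 or 3) there exists `C > 0` such that for all
continuously differentiable vector fields `u, v, w` with compact support in `Ω`, the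
skew-symmetrized trilinear form `b(u,v,w) = ½((u·∇v, w) − (u·∇w, v))` satisfies
`|b(u, v, w)| ≤ C ‖Du‖_{L²} ‖Dv‖_{L²} ‖Dw‖_{L²}`. -/
theorem skew_symmetric_form_le_grad_L2
    (d : ℕ) (hd : d = 2 ∨ d = 3)
    (Ω : Set (EuclideanSpace ℝ (Fin d)))
    (hΩopen : IsOpen Ω) (hΩbdd : Bornology.IsBounded Ω) :
    ∃ C : ℝ, 0 < C ∧
      ∀ u v w : EuclideanSpace ℝ (Fin d) → EuclideanSpace ℝ (Fin d),
        ContDiff ℝ 1 u → ContDiff ℝ 1 v → ContDiff ℝ 1 w →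
        HasCompactSupport u → HasCompactSupport v → HasCompactSupport w →
        tsupport u ⊆ Ω → tsupport v ⊆ Ω → tsupport w ⊆ Ω →
        |(1 / 2 : ℝ) * ((∫ x in Ω, ⟪(fderiv ℝ v x) (u x), w x⟫)
              - ∫ x in Ω, ⟪(fderiv ℝ w x) (u x), v x⟫)|
          ≤ C * Real.sqrt (∫ x in Ω, ‖fderiv ℝ u x‖ ^ 2)
              * Real.sqrt (∫ x in Ω, ‖fderiv ℝ v x‖ ^ 2)
              * Real.sqrt (∫ x in Ω, ‖fderiv ℝ w x‖ ^ 2) := by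
  obtain ⟨K, hKtop, hKle⟩ := aux_l4_bound d hd Ω hΩbdd
  refine ⟨K.toReal ^ 2 + 1, by positivity, ?_⟩
  intro u v w hu hv hw h2u h2v h2w hsu hsv hsw
  set su := Real.sqrt (∫ x in Ω, ‖fderiv ℝ u x‖ ^ 2) with hsudef
  set sv := Real.sqrt (∫ x in Ω, ‖fderiv ℝ v x‖ ^ 2) with hsvdef
  set sw := Real.sqrt (∫ x in Ω, ‖fderiv ℝ w x‖ ^ 2) with hswdef
  have hsu0 : 0 ≤ su := Real.sqrt_nonneg _
  have hsv0 : 0 ≤ sv := Real.sqrt_nonneg _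
  have hsw0 : 0 ≤ sw := Real.sqrt_nonneg _
  have hK0 : 0 ≤ K.toReal := ENNReal.toReal_nonneg
  -- eLpNorm of gradients as sqrt integrals
  have hNu : eLpNorm (fderiv ℝ u) 2 volume = ENNReal.ofReal su :=
    aux_sqrt_eq Ω _ (hu.fderiv_right (m := 0) le_rfl).continuous (h2u.fderiv (𝕜 := ℝ))
      ((support_fderiv_subset ℝ).trans hsu)
  have hNv : eLpNorm (fderiv ℝ v) 2 volume = ENNReal.ofReal sv :=
    aux_sqrt_eq Ω _ (hv.fderiv_right (m := 0) le_rfl).continuous (h2v.fderiv (𝕜 := ℝ))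
      ((support_fderiv_subset ℝ).trans hsv)
  have hNw : eLpNorm (fderiv ℝ w) 2 volume = ENNReal.ofReal sw :=
    aux_sqrt_eq Ω _ (hw.fderiv_right (m := 0) le_rfl).continuous (h2w.fderiv (𝕜 := ℝ))
      ((support_fderiv_subset ℝ).trans hsw)
  have hLu : eLpNorm u 4 volume ≤ K * ENNReal.ofReal su := by
    rw [← hNu]; exact hKle u hu h2u hsu
  have hLv : eLpNorm v 4 volume ≤ K * ENNReal.ofReal sv := by
    rw [← hNv]; exact hKle v hv h2v hsv
  have hLw : eLpNorm w 4 volume ≤ K * ENNReal.ofReal sw := by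
    rw [← hNw]; exact hKle w hw h2w hsw
  have hKeq : K = ENNReal.ofReal K.toReal := (ENNReal.ofReal_toReal hKtop).symm
  -- a general bound for a single trilinear term
  have key : ∀ (a b c : EuclideanSpace ℝ (Fin d) → EuclideanSpace ℝ (Fin d)),
      ContDiff ℝ 1 a → ContDiff ℝ 1 b → ContDiff ℝ 1 c →
      ∀ sa sc : ℝ, 0 ≤ sa → 0 ≤ sc →
      eLpNorm (fderiv ℝ b) 2 volume = ENNReal.ofReal (Real.sqrt (∫ x in Ω, ‖fderiv ℝ b x‖ ^ 2)) →
      eLpNorm a 4 volume ≤ K * ENNReal.ofReal sa →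
      eLpNorm c 4 volume ≤ K * ENNReal.ofReal sc →
      HasCompactSupport c →
      |∫ x in Ω, ⟪(fderiv ℝ b x) (a x), c x⟫|
        ≤ K.toReal ^ 2 * (sa * Real.sqrt (∫ x in Ω, ‖fderiv ℝ b x‖ ^ 2) * sc) := by
    intro a b c ha hb hc sa sc hsa0 hsc0 hNb hLa hLc h2c
    set sb := Real.sqrt (∫ x in Ω, ‖fderiv ℝ b x‖ ^ 2) with hsbdef
    have hsb0 : 0 ≤ sb := Real.sqrt_nonneg _
    have h1 := aux_tri Ω a b c ha hb hc h2c
    have h2 : ENNReal.ofReal |∫ x in Ω, ⟪(fderiv ℝ b x) (a x), c x⟫|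
        ≤ ENNReal.ofReal sb * (K * ENNReal.ofReal sa * (K * ENNReal.ofReal sc)) := by
      refine h1.trans ?_
      rw [hNb]
      gcongr
    rw [hKeq] at h2
    rw [← ENNReal.ofReal_mul hK0, ← ENNReal.ofReal_mul hK0,
      ← ENNReal.ofReal_mul (by positivity), ← ENNReal.ofReal_mul hsb0] at h2
    have h3 := (ENNReal.ofReal_le_ofReal_iff (by positivity)).mp h2
    calc |∫ x in Ω, ⟪(fderiv ℝ b x) (a x), c x⟫|
        ≤ sb * (K.toReal * sa * (K.toReal * sc)) := h3
      _ = K.toReal ^ 2 * (sa * sb * sc) := by ring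
  have hI1 := key u v w hu hv hw su sw hsu0 hsw0 hNv hLu hLw h2w
  have hI2 := key u w v hu hw hv su sv hsu0 hsv0 hNw hLu hLv h2v
  rw [← hsvdef] at hI1
  rw [← hswdef] at hI2
  have hprod : 0 ≤ su * sv * sw := by positivity
  have habs : |(1 / 2 : ℝ) * ((∫ x in Ω, ⟪(fderiv ℝ v x) (u x), w x⟫)
      - ∫ x in Ω, ⟪(fderiv ℝ w x) (u x), v x⟫)|
      ≤ (1/2) * (|∫ x in Ω, ⟪(fderiv ℝ v x) (u x), w x⟫|
        + |∫ x in Ω, ⟪(fderiv ℝ w x) (u x), v x⟫|) := by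
    rw [abs_mul]
    have := abs_sub (∫ x in Ω, ⟪(fderiv ℝ v x) (u x), w x⟫)
      (∫ x in Ω, ⟪(fderiv ℝ w x) (u x), v x⟫)
    rw [abs_of_nonneg (by norm_num : (0:ℝ) ≤ 1/2)]
    nlinarith [abs_nonneg ((∫ x in Ω, ⟪(fderiv ℝ v x) (u x), w x⟫)
      - ∫ x in Ω, ⟪(fderiv ℝ w x) (u x), v x⟫)]
  calc |(1 / 2 : ℝ) * ((∫ x in Ω, ⟪(fderiv ℝ v x) (u x), w x⟫)
        - ∫ x in Ω, ⟪(fderiv ℝ w x) (u x), v x⟫)|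
      ≤ (1/2) * (|∫ x in Ω, ⟪(fderiv ℝ v x) (u x), w x⟫|
        + |∫ x in Ω, ⟪(fderiv ℝ w x) (u x), v x⟫|) := habs
    _ ≤ (1/2) * (K.toReal ^ 2 * (su * sv * sw) + K.toReal ^ 2 * (su * sv * sw)) := by
        nlinarith [hI1, hI2]
    _ = K.toReal ^ 2 * (su * sv * sw) := by ring
    _ ≤ (K.toReal ^ 2 + 1) * su * sv * sw := by nlinarith
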